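/- arXiv:2409.02570 — 4 statements merged into one kernel-verified Lean document; each statement's English description precedes it below -/
import Mathlib

section
/- Let $a_i, a_j \in (0,1/2)$ with $a_i > a_j$. Define $\Delta_{ij} = (1-4a_i^2)(1-4a_j^2)$, $u = \frac{1}{2}\cdot\frac{4a_i^2-1+\sqrt{\Delta_{ij}}}{a_i^2-a_j^2}\, a_j$ and $v = \frac{1}{2}\cdot\frac{4a_j^2-1+\sqrt{\Delta_{ij}}}{a_j^2-a_i^2}\, a_i$. Then $u/a_j < 1 < v/a_i$. -/
theorem u_v_normalized_ineq (ai aj : ℝ) (haj : 0 < aj) (hij : aj < ai) (hai : ai < 1/2) :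
    (1/2 * ((4*ai^2 - 1 + Real.sqrt ((1 - 4*ai^2)*(1 - 4*aj^2))) / (ai^2 - aj^2)) * aj) / aj < 1 ∧
    (1 : ℝ) < (1/2 * ((4*aj^2 - 1 + Real.sqrt ((1 - 4*ai^2)*(1 - 4*aj^2))) / (aj^2 - ai^2)) * ai) / ai := by
  have hai0 : 0 < ai := haj.trans hij
  have hA : 0 < 1 - 4*ai^2 := by nlinarith
  have hB : 0 < 1 - 4*aj^2 := by nlinarith
  have hAB : (0:ℝ) ≤ (1 - 4*ai^2)*(1 - 4*aj^2) := by positivity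
  set s := Real.sqrt ((1 - 4*ai^2)*(1 - 4*aj^2)) with hs
  have hs2 : s^2 = (1 - 4*ai^2)*(1 - 4*aj^2) := Real.sq_sqrt hAB
  have hs0 : 0 ≤ s := Real.sqrt_nonneg _
  have hd : 0 < ai^2 - aj^2 := by nlinarith
  have key : 2*s < (1 - 4*ai^2) + (1 - 4*aj^2) := by
    nlinarith [sq_nonneg (s - (1 - 4*ai^2)), sq_nonneg (s - (1 - 4*aj^2)), hs2,
      mul_pos hA hB, sq_nonneg ((1 - 4*ai^2) - (1 - 4*aj^2))]
  have h2d : 0 < 2*(ai^2 - aj^2) := by linarith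
  constructor
  · rw [mul_div_assoc, div_self haj.ne', mul_one,
      show 1/2 * ((4*ai^2 - 1 + s) / (ai^2 - aj^2)) = (4*ai^2 - 1 + s)/(2*(ai^2 - aj^2)) by field_simp,
      div_lt_one h2d]
    nlinarith
  · rw [mul_div_assoc, div_self hai0.ne', mul_one,
      show 1/2 * ((4*aj^2 - 1 + s) / (aj^2 - ai^2)) = (1 - 4*aj^2 - s)/(2*(ai^2 - aj^2)) by
        have : aj^2 - ai^2 ≠ 0 := by nlinarith
        field_simp
        ring,
      lt_div_iff₀ h2d]
    nlinarith
end

section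
/- Let $a_i, a_j \in (0,1/2)$ with $a_i \neq a_j$, and set $u = \frac{1}{2}\cdot\frac{4a_i^2-1+\sqrt{\Delta_{ij}}}{a_i^2-a_j^2}\, a_j$, $v = \frac{1}{2}\cdot\frac{4a_j^2-1+\sqrt{\Delta_{ij}}}{a_j^2-a_i^2}\, a_i$ where $\Delta_{ij} = (1-4a_i^2)(1-4a_j^2)$. Then $(u,v)$ satisfies the system $a_i(u^2 - v^2 - 1) + v = 0$ and $a_j(v^2 - u^2 - 1) + u = 0$, and both $u > 0$ and $v > 0$. -/
theorem u_v_solve_system (ai aj : ℝ) (hai : 0 < ai) (hai' : ai < 1/2)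
    (haj : 0 < aj) (haj' : aj < 1/2) (hne : ai ≠ aj) :
    let Δ := (1 - 4*ai^2)*(1 - 4*aj^2)
    let u := 1/2 * ((4*ai^2 - 1 + Real.sqrt Δ) / (ai^2 - aj^2)) * aj
    let v := 1/2 * ((4*aj^2 - 1 + Real.sqrt Δ) / (aj^2 - ai^2)) * ai
    ai*(u^2 - v^2 - 1) + v = 0 ∧ aj*(v^2 - u^2 - 1) + u = 0 ∧ 0 < u ∧ 0 < v := by
  dsimp only
  have h1 : 0 < 1 - 4*ai^2 := by nlinarith
  have h2 : 0 < 1 - 4*aj^2 := by nlinarith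
  set s := Real.sqrt ((1 - 4*ai^2)*(1 - 4*aj^2)) with hs_def
  have hs : s^2 = (1 - 4*ai^2)*(1 - 4*aj^2) := Real.sq_sqrt (le_of_lt (mul_pos h1 h2))
  have hs0 : 0 < s := Real.sqrt_pos.mpr (mul_pos h1 h2)
  have hd : ai^2 - aj^2 ≠ 0 := by
    rcases hne.lt_or_gt with h | h
    · nlinarith
    · nlinarith
  have hd' : aj^2 - ai^2 ≠ 0 := fun h => hd (by linarith)
  refine ⟨?_, ?_, ?_, ?_⟩
  · field_simp
    linear_combination (ai*(ai^2-aj^2)^2*(aj^2-ai^2)) * hs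
  · field_simp
    linear_combination (aj*(aj^2-ai^2)^2*(ai^2-aj^2)) * hs
  · rcases hne.lt_or_gt with h | h
    · -- ai < aj : numerator and denominator both negative
      have hnum : 4*ai^2 - 1 + s < 0 := by nlinarith [hs, hs0, mul_pos h1 (show (0:ℝ) < aj^2 - ai^2 by nlinarith)]
      have hden : ai^2 - aj^2 < 0 := by nlinarith
      exact mul_pos (mul_pos (by norm_num) (div_pos_of_neg_of_neg hnum hden)) haj
    · have hnum : 0 < 4*ai^2 - 1 + s := by nlinarith [hs, hs0, mul_pos h1 (show (0:ℝ) < ai^2 - aj^2 by nlinarith)]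
      have hden : 0 < ai^2 - aj^2 := by nlinarith
      exact mul_pos (mul_pos (by norm_num) (div_pos hnum hden)) haj
  · rcases hne.lt_or_gt with h | h
    · have hnum : 0 < 4*aj^2 - 1 + s := by nlinarith [hs, hs0, mul_pos h2 (show (0:ℝ) < aj^2 - ai^2 by nlinarith)]
      have hden : 0 < aj^2 - ai^2 := by nlinarith
      exact mul_pos (mul_pos (by norm_num) (div_pos hnum hden)) hai
    · have hnum : 4*aj^2 - 1 + s < 0 := by nlinarith [hs, hs0, mul_pos h2 (show (0:ℝ) < ai^2 - aj^2 by nlinarith)]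
      have hden : aj^2 - ai^2 < 0 := by nlinarith
      exact mul_pos (mul_pos (by norm_num) (div_pos_of_neg_of_neg hnum hden)) hai
end

section
/- Let $a_i, a_j \in (0,1/2)$ with $a_i > a_j$, and define $t_{ij} = \Psi(a_i,a_j) = \frac{1}{2}\cdot\frac{4a_j^2-1+\sqrt{(1-4a_i^2)(1-4a_j^2)}}{a_j^2-a_i^2}\, a_i$. Then $a_i < t_{ij} < m(a_i)$, where $m(a_i) = \frac{1-\sqrt{1-4a_i^2}}{2a_i}$. -/
theorem t_ij_between (ai aj : ℝ) (haj : 0 < aj) (hij : aj < ai) (hai : ai < 1/2) :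
    let tij := 1/2 * ((4*aj^2 - 1 + Real.sqrt ((1 - 4*ai^2)*(1 - 4*aj^2))) / (aj^2 - ai^2)) * ai
    ai < tij ∧ tij < (1 - Real.sqrt (1 - 4*ai^2)) / (2*ai) := by
  intro tij
  have hai0 : 0 < ai := haj.trans hij
  have hA : (0:ℝ) < 1 - 4*ai^2 := by nlinarith
  have hB : (0:ℝ) < 1 - 4*aj^2 := by nlinarith
  set u := Real.sqrt (1 - 4*ai^2) with hu
  set v := Real.sqrt (1 - 4*aj^2) with hv
  have hu2 : u^2 = 1 - 4*ai^2 := Real.sq_sqrt hA.le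
  have hv2 : v^2 = 1 - 4*aj^2 := Real.sq_sqrt hB.le
  have hu0 : 0 < u := Real.sqrt_pos.mpr hA
  have hv0 : 0 < v := Real.sqrt_pos.mpr hB
  have huv : u < v := Real.sqrt_lt_sqrt hA.le (by nlinarith)
  have hv1 : v < 1 := by nlinarith
  have hsm : Real.sqrt ((1 - 4*ai^2)*(1 - 4*aj^2)) = u * v := Real.sqrt_mul hA.le _
  have key : tij = 2*ai*v/(u+v) := by
    show 1/2 * ((4*aj^2 - 1 + Real.sqrt ((1 - 4*ai^2)*(1 - 4*aj^2))) / (aj^2 - ai^2)) * ai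
        = 2*ai*v/(u+v)
    rw [hsm]
    have h1 : 4*aj^2 - 1 = -v^2 := by rw [hv2]; ring
    have h2 : aj^2 - ai^2 = (u^2 - v^2)/4 := by rw [hu2, hv2]; ring
    rw [h1, h2]
    have hne : u^2 - v^2 ≠ 0 := by nlinarith
    have hne2 : u + v ≠ 0 := by positivity
    field_simp
    ring
  rw [key]
  constructor
  · rw [lt_div_iff₀ (by linarith)]
    nlinarith
  · rw [div_lt_div_iff₀ (by linarith) (by linarith)]
    nlinarith [mul_pos (mul_pos (by linarith : (0:ℝ) < 1 - u) hu0) (by linarith : (0:ℝ) < 1 - v)]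
end

section
/- The function $\theta(a) = a - \frac{1}{2} + \frac{1}{2}\sqrt{\frac{1-2a}{1+2a}}$ on $(0,1/2)$ attains its maximum at $a^* = \frac{\mu^2 - 2\mu + 4}{6\mu}$ where $\mu = \sqrt[3]{19+3\sqrt{33}}$; moreover, for all $a_1, a_2, a_3 \in [a^*, 1/2)$ one has $a_1 + a_2 + a_3 - \frac{1}{2} > 0.7 > \theta(a_i)$ for each $i$, provided $3a^* - 1/2 > 0.7$ (in fact $a^* \approx 0.41964$ so $3a^* - 0.5 > 0.7$), and $\theta(a) < 0.068$ for all $a \in (0,1/2)$. -/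
noncomputable def thetaFun (a : ℝ) : ℝ :=
  a - 1/2 + Real.sqrt ((1 - 2*a)/(1 + 2*a))/2

noncomputable def muCubeRoot : ℝ := (19 + 3*Real.sqrt 33) ^ ((1 : ℝ)/3)

noncomputable def aStar : ℝ := (muCubeRoot^2 - 2*muCubeRoot + 4) / (6*muCubeRoot)

lemma sqrt33_gt : 5.7 < Real.sqrt 33 := by
  have : (5.7:ℝ) = Real.sqrt (5.7^2) := by
    rw [Real.sqrt_sq] <;> norm_num
  rw [this]
  apply Real.sqrt_lt_sqrt <;> norm_num

lemma sqrt33_lt : Real.sqrt 33 < 5.8 := by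
  have h : (33:ℝ) < 5.8^2 := by norm_num
  nlinarith [Real.sq_sqrt (by norm_num : (33:ℝ) ≥ 0), Real.sqrt_nonneg 33]

lemma mu_pos : 0 < muCubeRoot := by
  apply Real.rpow_pos_of_pos
  nlinarith [Real.sqrt_nonneg 33]

lemma mu_cube : muCubeRoot^3 = 19 + 3*Real.sqrt 33 := by
  rw [muCubeRoot, ← Real.rpow_natCast (_ ^ _) 3, ← Real.rpow_mul (by nlinarith [Real.sqrt_nonneg 33])]
  norm_num

lemma mu6 : muCubeRoot^6 - 38*muCubeRoot^3 + 64 = 0 := by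
  have h := mu_cube
  have h33 : Real.sqrt 33 ^ 2 = 33 := Real.sq_sqrt (by norm_num)
  have : muCubeRoot^6 = (muCubeRoot^3)^2 := by ring
  nlinarith [h33, h]

lemma mu_gt : 3.3 < muCubeRoot := by
  have h := mu_cube
  have := sqrt33_gt
  nlinarith [mu_pos, sq_nonneg (muCubeRoot - 3.3), sq_nonneg (muCubeRoot + 3.3)]

lemma mu_lt : muCubeRoot < 3.4 := by
  have h := mu_cube
  have := sqrt33_lt
  nlinarith [mu_pos, sq_nonneg (muCubeRoot - 3.4), sq_nonneg (muCubeRoot + 3.4)]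

lemma aStar_gt : 0.4 < aStar := by
  rw [aStar, lt_div_iff₀ (by nlinarith [mu_gt])]
  nlinarith [mu_gt, mu_lt, sq_nonneg (muCubeRoot - 3.3)]

lemma aStar_lt : aStar < 0.5 := by
  rw [aStar, div_lt_iff₀ (by nlinarith [mu_gt])]
  nlinarith [mu_gt, mu_lt]

lemma hquart : (1 - 2*aStar)*(1 + 2*aStar)^3 = 1 := by
  have hm := mu6
  have hpos := mu_pos
  have hne : (6*muCubeRoot) ≠ 0 := by positivity
  rw [aStar]
  field_simp
  ring_nf
  nlinarith [mu6, sq_nonneg muCubeRoot]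

-- rewrite thetaFun into g-form
lemma theta_eq (a : ℝ) (h0 : 0 < a) (h1 : a < 1/2) :
    thetaFun a = Real.sqrt ((1 - 2*a)/(1 + 2*a)) * (1 - Real.sqrt ((1 - 2*a)/(1 + 2*a)))^2
      / (2*(1 + Real.sqrt ((1 - 2*a)/(1 + 2*a))^2)) := by
  set t := Real.sqrt ((1 - 2*a)/(1 + 2*a)) with ht
  have hxnn : (0:ℝ) ≤ (1 - 2*a)/(1 + 2*a) := by
    apply div_nonneg <;> linarith
  have ht2 : t^2 = (1 - 2*a)/(1 + 2*a) := Real.sq_sqrt hxnn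
  have hne : (1 + 2*a) ≠ 0 := by linarith
  have key : t^2 * (1 + 2*a) = 1 - 2*a := by
    rw [ht2]; field_simp
  rw [thetaFun, eq_div_iff (by positivity)]
  linear_combination key

lemma g_lt (t : ℝ) (h0 : 0 ≤ t) (h1 : t ≤ 1) :
    t*(1 - t)^2/(2*(1 + t^2)) < 0.068 := by
  rw [div_lt_iff₀ (by positivity)]
  nlinarith [mul_nonneg (sq_nonneg (t - 2953/10000)) (by linarith : (0:ℝ) ≤ 15454/10000 - t)]

lemma g_le (t t' : ℝ) (h0 : 0 ≤ t) (h1 : t ≤ 1) (h0' : 0 < t') (h1' : t' < 1)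
    (hc : t'^3 + t'^2 + 3*t' - 1 = 0) :
    t*(1 - t)^2/(2*(1 + t^2)) ≤ t'*(1 - t')^2/(2*(1 + t'^2)) := by
  rw [div_le_div_iff₀ (by positivity) (by positivity)]
  have key : t'*(1 + t'^2)*(t'*(1 - t')^2*(2*(1 + t^2)) - t*(1 - t)^2*(2*(1 + t'^2)))
      = 2*(1 + t'^2)*(t - t')^2*((1 - t)*t'*(1 + t'^2) + 2*t'^2) := by
    linear_combination (2*t*t' - 2*t^2*t' - 2*t'^2 + 2*t*t'^2 + 2*t*t'^3 - 2*t^2*t'^3 - 2*t'^4 + 2*t*t'^4) * hc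
  have hrhs : 0 ≤ 2*(1 + t'^2)*(t - t')^2*((1 - t)*t'*(1 + t'^2) + 2*t'^2) := by
    apply mul_nonneg
    · positivity
    · have : 0 ≤ (1 - t)*t'*(1 + t'^2) := by
        apply mul_nonneg (mul_nonneg (by linarith) h0'.le); positivity
      nlinarith [sq_nonneg t']
  nlinarith [key, hrhs, mul_pos h0' (by positivity : (0:ℝ) < 1 + t'^2)]

theorem thetaFun_max_and_bounds :
    IsMaxOn thetaFun (Set.Ioo (0 : ℝ) (1/2)) aStar ∧
    aStar ∈ Set.Ioo (0 : ℝ) (1/2) ∧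
    (∀ a ∈ Set.Ioo (0 : ℝ) (1/2), thetaFun a < 0.068) ∧
    3*aStar - 1/2 > 0.7 ∧
    (∀ a1 a2 a3 : ℝ, a1 ∈ Set.Ico aStar (1/2) → a2 ∈ Set.Ico aStar (1/2) →
      a3 ∈ Set.Ico aStar (1/2) →
      a1 + a2 + a3 - 1/2 > 0.7 ∧ thetaFun a1 < 0.7 ∧ thetaFun a2 < 0.7 ∧ thetaFun a3 < 0.7) := by
  have hag := aStar_gt
  have hal := aStar_lt
  have ha0 : 0 < aStar := by linarith
  have ha12 : aStar < 1/2 := by linarith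
  have hq := hquart
  -- t* facts
  set b := aStar with hb
  have hs1 : (1:ℝ) < 1 + 2*b := by linarith
  set ts := Real.sqrt ((1 - 2*b)/(1 + 2*b)) with hts
  have hxnn : (0:ℝ) ≤ (1 - 2*b)/(1 + 2*b) := by
    apply div_nonneg <;> linarith
  have hts_eq : ts = 1/(1 + 2*b)^2 := by
    rw [hts]
    have : (1 - 2*b)/(1 + 2*b) = (1/(1 + 2*b)^2)^2 := by
      field_simp
      linear_combination hq
    rw [this, Real.sqrt_sq (by positivity)]
  have hts_pos : 0 < ts := by rw [hts_eq]; positivity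
  have hts_lt : ts < 1 := by
    rw [hts_eq, div_lt_one (by positivity)]
    nlinarith
  have hts2 : ts^2 = (1 - 2*b)/(1 + 2*b) := Real.sq_sqrt hxnn
  have hc4 : (1 + ts^2)^2 = 4*ts := by
    rw [hts2, hts_eq]
    field_simp
    ring_nf
  have hcube : ts^3 + ts^2 + 3*ts - 1 = 0 := by
    have hfac : (ts - 1) * (ts^3 + ts^2 + 3*ts - 1) = 0 := by linear_combination hc4
    rcases mul_eq_zero.mp hfac with h | h
    · exfalso; linarith
    · exact h
  have htheta_star : thetaFun b = ts*(1 - ts)^2/(2*(1 + ts^2)) :=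
    theta_eq b ha0 ha12
  -- main max property
  have hmax : ∀ a ∈ Set.Ioo (0:ℝ) (1/2), thetaFun a ≤ thetaFun b := by
    intro a ha
    obtain ⟨ha0', ha1'⟩ := ha
    set t := Real.sqrt ((1 - 2*a)/(1 + 2*a)) with htdef
    have hxnn' : (0:ℝ) ≤ (1 - 2*a)/(1 + 2*a) := by
      apply div_nonneg <;> linarith
    have ht0 : 0 ≤ t := Real.sqrt_nonneg _
    have ht2' : t^2 = (1 - 2*a)/(1 + 2*a) := Real.sq_sqrt hxnn'
    have ht1 : t ≤ 1 := by
      have : (1 - 2*a)/(1 + 2*a) ≤ 1 := by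
        rw [div_le_one (by linarith)]; linarith
      nlinarith [ht0, ht2']
    rw [theta_eq a ha0' ha1', htheta_star]
    exact g_le t ts ht0 ht1 hts_pos hts_lt hcube
  have hbound : ∀ a ∈ Set.Ioo (0:ℝ) (1/2), thetaFun a < 0.068 := by
    intro a ha
    obtain ⟨ha0', ha1'⟩ := ha
    set t := Real.sqrt ((1 - 2*a)/(1 + 2*a)) with htdef
    have hxnn' : (0:ℝ) ≤ (1 - 2*a)/(1 + 2*a) := by
      apply div_nonneg <;> linarith
    have ht0 : 0 ≤ t := Real.sqrt_nonneg _
    have ht2' : t^2 = (1 - 2*a)/(1 + 2*a) := Real.sq_sqrt hxnn'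
    have ht1 : t ≤ 1 := by
      have : (1 - 2*a)/(1 + 2*a) ≤ 1 := by
        rw [div_le_one (by linarith)]; linarith
      nlinarith [ht0, ht2']
    rw [theta_eq a ha0' ha1']
    exact g_lt t ht0 ht1
  refine ⟨hmax, ⟨ha0, ha12⟩, hbound, by norm_num; linarith, ?_⟩
  intro a1 a2 a3 h1 h2 h3
  have m1 : a1 ∈ Set.Ioo (0:ℝ) (1/2) := ⟨by linarith [h1.1], h1.2⟩
  have m2 : a2 ∈ Set.Ioo (0:ℝ) (1/2) := ⟨by linarith [h2.1], h2.2⟩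
  have m3 : a3 ∈ Set.Ioo (0:ℝ) (1/2) := ⟨by linarith [h3.1], h3.2⟩
  refine ⟨?_, ?_, ?_, ?_⟩
  · have := h1.1; have := h2.1; have := h3.1
    norm_num; linarith
  · have := hbound a1 m1; norm_num at this ⊢; linarith
  · have := hbound a2 m2; norm_num at this ⊢; linarith
  · have := hbound a3 m3; norm_num at this ⊢; linarith
end
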